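/- arXiv:1907.08247 — 3 statements merged into one kernel-verified Lean document; each statement's English description precedes it below -/
import Mathlib

section
/- Let Φ be the fixed point starting with 0 of the morphism φ: 0 ↦ 00101, 1 ↦ 11011. For every integer C ≥ 4 and every n ≥ 132·5^{C−4}, there is a factor of Φ of length n containing at least n/3 + C zeros, and also a factor of length n containing at most n/3 − C zeros. -/
/-- the 5-uniform morphism φ: 0 ↦ 00101, 1 ↦ 11011 (on letters). -/
def phiMap (x : ℕ) : List ℕ := if x = 0 then [0, 0, 1, 0, 1] else [1, 1, 0, 1, 1]

/-- φ applied to a word. -/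
def phiL (l : List ℕ) : List ℕ := l.flatMap phiMap

/-- `Phi m` is the `m`-th letter (0-indexed) of the fixed point Φ = φ^ω(0) of φ
starting with 0: `φ^[m+1]([0])` has length `5^(m+1) > m` and is a prefix of Φ. -/
def Phi (m : ℕ) : ℕ := (phiL^[m + 1] [0]).getD m 0

/-- the length-`n` factor of `w` starting at position `i`. -/
def factorAt (w : ℕ → ℕ) (i n : ℕ) : List ℕ := (List.range n).map (fun j => w (i + j))

/-- `u` is a factor of the infinite word `w`. -/
def IsFactor (w : ℕ → ℕ) (u : List ℕ) : Prop := ∃ i, u = factorAt w i u.length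

lemma phiMap_length (x : ℕ) : (phiMap x).length = 5 := by
  unfold phiMap; split <;> rfl

lemma phiL_nil : phiL [] = [] := rfl

lemma phiL_cons (a : ℕ) (l : List ℕ) : phiL (a :: l) = phiMap a ++ phiL l := by
  simp [phiL]

lemma phiL_append (l l' : List ℕ) : phiL (l ++ l') = phiL l ++ phiL l' := by
  simp [phiL]

lemma phiL_length (l : List ℕ) : (phiL l).length = 5 * l.length := by
  induction l with
  | nil => rfl
  | cons a t ih => simp [phiL_cons, ih, phiMap_length]; ring

lemma phiL_count (l : List ℕ) :
    (phiL l).count 0 = l.length + 2 * l.count 0 := by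
  induction l with
  | nil => rfl
  | cons a t ih =>
    rw [phiL_cons, List.count_append, ih]
    by_cases h : a = 0 <;>
      simp [phiMap, h, List.count_cons] <;> omega

/-- `A k = φ^k(0)` as a word. -/
def Aw (k : ℕ) : List ℕ := phiL^[k] [0]

lemma Aw_succ (k : ℕ) : Aw (k+1) = phiL (Aw k) := Function.iterate_succ_apply' _ _ _

lemma Aw_length (k : ℕ) : (Aw k).length = 5 ^ k := by
  induction k with
  | zero => rfl
  | succ k ih => rw [Aw_succ, phiL_length, ih, pow_succ]; ring

lemma Aw_prefix (k : ℕ) : Aw k <+: Aw (k+1) := by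
  have h : Aw (k+1) = phiL^[k] ([0] ++ [0,1,0,1]) := by
    rw [Aw, Function.iterate_succ_apply]; rfl
  have h2 : ∀ (K : ℕ) (a b : List ℕ), phiL^[K] (a ++ b) = phiL^[K] a ++ phiL^[K] b := by
    intro K
    induction K with
    | zero => intro a b; rfl
    | succ K ih =>
      intro a b
      rw [Function.iterate_succ_apply, Function.iterate_succ_apply,
        Function.iterate_succ_apply, phiL_append, ih]
  rw [h, h2 k]
  exact ⟨_, rfl⟩

lemma Aw_prefix_le {j k : ℕ} (h : j ≤ k) : Aw j <+: Aw k := by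
  induction k with
  | zero => simp_all
  | succ k ih =>
    rcases Nat.lt_or_ge j (k+1) with h'|h'
    · exact (ih (by omega)).trans (Aw_prefix k)
    · have : j = k+1 := by omega
      simp [this]

lemma getD_of_prefix {l l' : List ℕ} (h : l <+: l') {j : ℕ} (hj : j < l.length) :
    l'.getD j 0 = l.getD j 0 := by
  obtain ⟨t, rfl⟩ := h
  rw [List.getD_append _ _ _ _ hj]

lemma Phi_eq_Aw (m K : ℕ) (h : m < 5 ^ K) : Phi m = (Aw K).getD m 0 := by
  have h1 : m < (Aw (m+1)).length := by
    rw [Aw_length]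
    calc m < 5 ^ m := Nat.lt_pow_self (by norm_num)
    _ ≤ 5 ^ (m+1) := Nat.pow_le_pow_right (by norm_num) (by omega)
  have h2 : m < (Aw K).length := by rw [Aw_length]; exact h
  rcases Nat.le_total (m+1) K with hK|hK
  · rw [Phi, show phiL^[m+1] [0] = Aw (m+1) from rfl,
      ← getD_of_prefix (Aw_prefix_le hK) h1]
  · rw [Phi, show phiL^[m+1] [0] = Aw (m+1) from rfl,
      ← getD_of_prefix (Aw_prefix_le hK) h2]

lemma phiL_getD (l : List ℕ) (j : ℕ) (hj : j < 5 * l.length) :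
    (phiL l).getD j 0 = (phiMap (l.getD (j/5) 0)).getD (j % 5) 0 := by
  induction l generalizing j with
  | nil => simp at hj
  | cons a t ih =>
    rw [phiL_cons]
    rcases Nat.lt_or_ge j 5 with h5 | h5
    · rw [List.getD_append _ _ _ _ (by rw [phiMap_length]; exact h5),
        Nat.div_eq_of_lt h5, Nat.mod_eq_of_lt h5]
      rfl
    · obtain ⟨j', rfl⟩ : ∃ j', j = 5 + j' := ⟨j - 5, by omega⟩
      have hlen : (phiMap a).length = 5 := phiMap_length a
      have : (phiMap a ++ phiL t).getD (5 + j') 0 = (phiL t).getD j' 0 := by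
        rw [List.getD_append_right _ _ _ _ (by omega), hlen]
        congr 1; omega
      rw [this, ih j' (by simp at hj ⊢; omega)]
      have e1 : (5 + j') / 5 = j' / 5 + 1 := by omega
      have e2 : (5 + j') % 5 = j' % 5 := by omega
      rw [e1, e2]
      rfl

lemma Phi_fix (q s : ℕ) (hs : s < 5) :
    Phi (5 * q + s) = (phiMap (Phi q)).getD s 0 := by
  have hq : q < 5 ^ (q + 1) := by
    calc q < 5 ^ q := Nat.lt_pow_self (by norm_num)
    _ ≤ 5 ^ (q+1) := Nat.pow_le_pow_right (by norm_num) (by omega)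
  have hn : 5 * q + s < 5 ^ (q + 2) := by
    have : 5 ^ (q+2) = 5 * 5 ^ (q+1) := by ring
    omega
  rw [Phi_eq_Aw _ (q+2) hn, Phi_eq_Aw q (q+1) hq,
    show Aw (q+2) = phiL (Aw (q+1)) from Aw_succ (q+1),
    phiL_getD _ _ (by
      rw [Aw_length]
      have h' : 5 ^ (q+2) = 5 * 5 ^ (q+1) := by ring
      omega)]
  congr 2
  · rw [show (5*q+s)/5 = q by omega]
  · omega

lemma factorAt_length (w : ℕ → ℕ) (i n : ℕ) : (factorAt w i n).length = n := by
  simp [factorAt]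

lemma factorAt_getElem (w : ℕ → ℕ) (i n j : ℕ) (hj : j < n) :
    (factorAt w i n)[j]'(by simp [factorAt_length, hj]) = w (i + j) := by
  simp [factorAt]

lemma factorAt_getD (w : ℕ → ℕ) (i n j : ℕ) (hj : j < n) :
    (factorAt w i n).getD j 0 = w (i + j) := by
  rw [List.getD_eq_getElem _ _ (by simpa [factorAt_length] using hj)]
  exact factorAt_getElem w i n j hj

lemma factorAt_slice (K i n : ℕ) (h : i + n ≤ 5 ^ K) :
    factorAt Phi i n = ((Aw K).drop i).take n := by
  apply List.ext_getElem
  · rw [factorAt_length, List.length_take, List.length_drop, Aw_length]; omega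
  · intro j h1 h2
    have hj : j < n := by simpa [factorAt_length] using h1
    rw [factorAt_getElem _ _ _ _ hj, List.getElem_take, List.getElem_drop,
      Phi_eq_Aw _ K (by omega), List.getD_eq_getElem _ _ (by rw [Aw_length]; omega)]

lemma phi_factor (i m n : ℕ) (h : n ≤ 5 * m) :
    factorAt Phi (5*i) n = (phiL (factorAt Phi i m)).take n := by
  apply List.ext_getElem
  · rw [factorAt_length, List.length_take, phiL_length, factorAt_length]; omega
  · intro j h1 h2
    have hj : j < n := by simpa [factorAt_length] using h1
    have hjm : j < 5 * (factorAt Phi i m).length := by rw [factorAt_length]; omega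
    rw [factorAt_getElem _ _ _ _ hj, List.getElem_take,
      ← List.getD_eq_getElem _ 0 (by rw [phiL_length, factorAt_length]; omega),
      phiL_getD _ _ hjm, factorAt_getD _ _ _ _ (by rw [factorAt_length] at hjm; omega)]
    have e : 5*i + j = 5 * (i + j/5) + j % 5 := by omega
    rw [e, Phi_fix _ _ (by omega)]

lemma take_append_full (l l' : List ℕ) (r : ℕ) :
    (l ++ l').take (l.length + r) = l ++ l'.take r := by
  rw [List.take_append, List.take_of_length_le (by omega)]
  congr 2
  omega

lemma step_both (u : List ℕ) (n : ℕ) (h1 : 5 * u.length ≤ n + 4) (h2 : n ≤ 5 * u.length) :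
    (∀ d, u.length + d ≤ 3 * u.count 0 → n + 2*d ≤ 3 * ((phiL u).take n).count 0 + 2) ∧
    (∀ d, 3 * u.count 0 + d ≤ u.length → 3 * ((phiL u).take n).count 0 + 2*d ≤ n + 2) := by
  rcases eq_or_lt_of_le h2 with he | hlt
  · rw [he, List.take_of_length_le (by rw [phiL_length])]
    rw [phiL_count]
    constructor <;> intro d hd <;> omega
  · have hne : u ≠ [] := by rintro rfl; simp at hlt
    have hu : u.dropLast ++ [u.getLast hne] = u := List.dropLast_append_getLast hne
    set c := u.getLast hne with hc
    set u' := u.dropLast with hu'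
    have hm : u'.length = u.length - 1 := List.length_dropLast
    have hL : 1 ≤ u.length := by
      rcases u with _ | _
      · simp at hne
      · simp
    obtain ⟨r, hr⟩ : ∃ r, n = 5 * u'.length + r := ⟨n - 5 * u'.length, by omega⟩
    have hr4 : r ≤ 4 := by omega
    have hr1 : 1 ≤ r := by omega
    have hsplit : (phiL u).take n = phiL u' ++ (phiMap c).take r := by
      conv_lhs => rw [← hu]
      rw [phiL_append, show phiL [c] = phiMap c ++ [] by simp [phiL], List.append_nil,
        hr, ← phiL_length u', take_append_full]
    rw [hsplit, List.count_append, phiL_count]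
    have hcu : u.count 0 = u'.count 0 + List.count 0 [c] := by
      conv_lhs => rw [← hu]
      rw [List.count_append]
    by_cases h : c = 0
    · rw [h] at hcu ⊢
      have hcount : u.count 0 = u'.count 0 + 1 := by simpa using hcu
      have hz1 : 3 * ((phiMap 0).take r).count 0 ≤ r + 6 := by
        interval_cases r <;> decide
      have hz2 : r + 2 ≤ 3 * ((phiMap 0).take r).count 0 := by
        interval_cases r <;> decide
      constructor <;> intro d hd <;> omega
    · have hcount : u.count 0 = u'.count 0 := by
        rw [hcu, List.count_singleton']
        simp [h, eq_comm]
      have hz1 : 3 * ((phiMap c).take r).count 0 ≤ r := by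
        rw [show phiMap c = [1,1,0,1,1] from if_neg h]
        interval_cases r <;> decide
      have hz2 : r ≤ 3 * ((phiMap c).take r).count 0 + 4 := by
        rw [show phiMap c = [1,1,0,1,1] from if_neg h]
        interval_cases r <;> decide
      constructor <;> intro d hd <;> omega
def dpos (n : ℕ) : ℕ :=
  match n with
  | 28 => 44
  | 29 => 223
  | 31 => 44
  | 32 => 219
  | 33 => 219
  | 34 => 217
  | 35 => 217
  | 36 => 219
  | 37 => 217
  | 38 => 217
  | 39 => 217
  | 40 => 216
  | 41 => 216
  | 42 => 217
  | 43 => 209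
  | 44 => 213
  | 45 => 236
  | 46 => 209
  | 47 => 209
  | 48 => 209
  | 49 => 207
  | 50 => 207
  | 51 => 209
  | 52 => 207
  | 53 => 207
  | 54 => 217
  | 55 => 216
  | 56 => 216
  | 57 => 217
  | 58 => 209
  | 59 => 213
  | 60 => 216
  | 61 => 209
  | 62 => 209
  | 63 => 209
  | 64 => 207
  | 65 => 207
  | 66 => 209
  | 67 => 207
  | 68 => 207
  | 69 => 207
  | 70 => 206
  | 71 => 206
  | 72 => 207
  | 73 => 204
  | 74 => 206
  | 75 => 206
  | 76 => 204
  | 77 => 204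
  | 78 => 204
  | 79 => 202
  | 80 => 202
  | 81 => 204
  | 82 => 202
  | 83 => 202
  | 84 => 207
  | 85 => 206
  | 86 => 206
  | 87 => 207
  | 88 => 169
  | 89 => 193
  | 90 => 206
  | 91 => 169
  | 92 => 189
  | 93 => 189
  | 94 => 187
  | 95 => 187
  | 96 => 189
  | 97 => 187
  | 98 => 187
  | 99 => 1177
  | 100 => 1176
  | 101 => 1176
  | 102 => 1177
  | 103 => 169
  | 104 => 173
  | 105 => 1176
  | 106 => 169
  | 107 => 169
  | 108 => 169
  | 109 => 167
  | 110 => 167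
  | 111 => 169
  | 112 => 167
  | 113 => 167
  | 114 => 167
  | 115 => 166
  | 116 => 166
  | 117 => 167
  | 118 => 159
  | 119 => 163
  | 120 => 236
  | 121 => 159
  | 122 => 159
  | 123 => 159
  | 124 => 157
  | 125 => 157
  | 126 => 159
  | 127 => 157
  | 128 => 157
  | 129 => 167
  | 130 => 166
  | 131 => 166
  | 132 => 167
  | _ => 0

def dpos2 (n : ℕ) : ℕ :=
  match n with
  | 132 => 219
  | 133 => 219
  | 134 => 223
  | 135 => 217
  | 146 => 1111
  | 147 => 209
  | 148 => 209
  | 149 => 223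
  | 150 => 207
  | _ => 0

set_option maxRecDepth 10000 in
lemma Ebase1 : ∀ n < 133, 27 ≤ n → n + 7 ≤ 3 * ((Aw 4).take n).count 0 := by decide

set_option maxRecDepth 100000 in
lemma Dbase1 : ∀ n < 133, 28 ≤ n → n ≠ 30 →
    3 * (((Aw 5).drop (dpos n)).take n).count 0 + 7 ≤ n := by decide

set_option maxRecDepth 100000 in
lemma Dbase2 : ∀ n < 151, 132 ≤ n → (n ≤ 135 ∨ 146 ≤ n) →
    3 * (((Aw 5).drop (dpos2 n)).take n).count 0 + 12 ≤ n := by decide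

set_option maxRecDepth 10000 in
lemma dpos_le : ∀ n < 133, dpos n ≤ 1177 := by decide
set_option maxRecDepth 10000 in
lemma dpos2_le : ∀ n < 151, dpos2 n ≤ 1111 := by decide

lemma EbaseF (n : ℕ) (h1 : 27 ≤ n) (h2 : n ≤ 132) :
    ∃ i, n + 7 ≤ 3 * (factorAt Phi i n).count 0 := by
  refine ⟨0, ?_⟩
  have hs : factorAt Phi 0 n = ((Aw 4).drop 0).take n :=
    factorAt_slice 4 0 n (by norm_num; omega)
  rw [hs, List.drop_zero]
  exact Ebase1 n (by omega) h1

lemma DbaseF (n : ℕ) (h1 : 28 ≤ n) (h2 : n ≤ 132) (h3 : n ≠ 30) :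
    ∃ i, 3 * (factorAt Phi i n).count 0 + 7 ≤ n := by
  refine ⟨dpos n, ?_⟩
  have hb := dpos_le n (by omega)
  have hs : factorAt Phi (dpos n) n = ((Aw 5).drop (dpos n)).take n :=
    factorAt_slice 5 _ n (by norm_num; omega)
  rw [hs]
  exact Dbase1 n (by omega) h1 h3

lemma DbaseG (n : ℕ) (h1 : 132 ≤ n) (h2 : n ≤ 135 ∨ (146 ≤ n ∧ n ≤ 150)) :
    ∃ i, 3 * (factorAt Phi i n).count 0 + 12 ≤ n := by
  refine ⟨dpos2 n, ?_⟩
  have hb := dpos2_le n (by omega)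
  have hs : factorAt Phi (dpos2 n) n = ((Aw 5).drop (dpos2 n)).take n :=
    factorAt_slice 5 _ n (by norm_num; omega)
  rw [hs]
  exact Dbase2 n (by omega) h1 (by omega)

lemma stepE (i m n d : ℕ) (h1 : 5*m ≤ n + 4) (h2 : n ≤ 5*m)
    (hd : m + d ≤ 3 * (factorAt Phi i m).count 0) :
    n + 2*d ≤ 3 * (factorAt Phi (5*i) n).count 0 + 2 := by
  rw [phi_factor i m n h2]
  exact (step_both (factorAt Phi i m) n (by rw [factorAt_length]; omega)
    (by rw [factorAt_length]; omega)).1 d (by rw [factorAt_length]; omega)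

lemma stepD (i m n d : ℕ) (h1 : 5*m ≤ n + 4) (h2 : n ≤ 5*m)
    (hd : 3 * (factorAt Phi i m).count 0 + d ≤ m) :
    3 * (factorAt Phi (5*i) n).count 0 + 2*d ≤ n + 2 := by
  rw [phi_factor i m n h2]
  exact (step_both (factorAt Phi i m) n (by rw [factorAt_length]; omega)
    (by rw [factorAt_length]; omega)).2 d (by rw [factorAt_length]; omega)

lemma mainE : ∀ n k, 132 * 5^k ≤ n → ∃ i, n + (7 * 2^k + 5) ≤ 3 * (factorAt Phi i n).count 0 := by
  intro n
  induction n using Nat.strong_induction_on with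
  | _ n ih =>
  intro k hk
  have hp : (1:ℕ) ≤ 5^k := Nat.one_le_pow _ _ (by norm_num)
  have h132 : 132 ≤ n := le_trans (by nlinarith) hk
  have hm1 : 5*((n+4)/5) ≤ n + 4 := by omega
  have hm2 : n ≤ 5*((n+4)/5) := by omega
  cases k with
  | zero =>
    rcases le_or_gt n 659 with h659 | h659
    · obtain ⟨i, hi⟩ := EbaseF ((n+4)/5) (by omega) (by omega)
      obtain h := stepE i _ n 7 hm1 hm2 (by omega)
      exact ⟨5*i, by simpa using by omega⟩
    · obtain ⟨i, hi⟩ := ih ((n+4)/5) (by omega) 0 (by simpa using by omega)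
      obtain h := stepE i _ n 12 hm1 hm2 (by simpa using by omega)
      exact ⟨5*i, by simpa using by omega⟩
  | succ k' =>
    have hk' : 132 * 5^k' ≤ (n+4)/5 := by
      have h5 : 5 * (132 * 5^k') = 132 * 5^(k'+1) := by ring
      omega
    obtain ⟨i, hi⟩ := ih ((n+4)/5) (by omega) k' hk'
    obtain h := stepE i _ n (7 * 2^k' + 5) hm1 hm2 (by omega)
    refine ⟨5*i, ?_⟩
    have h2 : 2^(k'+1) = 2 * 2^k' := by ring
    omega

lemma mainD : ∀ n k, 132 * 5^k ≤ n → ∃ i, 3 * (factorAt Phi i n).count 0 + (7 * 2^k + 5) ≤ n := by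
  intro n
  induction n using Nat.strong_induction_on with
  | _ n ih =>
  intro k hk
  have hp : (1:ℕ) ≤ 5^k := Nat.one_le_pow _ _ (by norm_num)
  have h132 : 132 ≤ n := le_trans (by nlinarith) hk
  have hm1 : 5*((n+4)/5) ≤ n + 4 := by omega
  have hm2 : n ≤ 5*((n+4)/5) := by omega
  cases k with
  | zero =>
    rcases le_or_gt n 659 with h659 | h659
    · rcases le_or_gt n 135 with hd1 | hd1
      · obtain ⟨i, hi⟩ := DbaseG n h132 (Or.inl hd1)
        exact ⟨i, by omega⟩
      · rcases (by omega : (146 ≤ n ∧ n ≤ 150) ∨ (n < 146 ∨ 150 < n)) with hd2 | hd2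
        · obtain ⟨i, hi⟩ := DbaseG n h132 (Or.inr hd2)
          exact ⟨i, by omega⟩
        · obtain ⟨i, hi⟩ := DbaseF ((n+4)/5) (by omega) (by omega) (by omega)
          obtain h := stepD i _ n 7 hm1 hm2 (by omega)
          exact ⟨5*i, by simpa using by omega⟩
    · obtain ⟨i, hi⟩ := ih ((n+4)/5) (by omega) 0 (by simpa using by omega)
      obtain h := stepD i _ n 12 hm1 hm2 (by simpa using by omega)
      exact ⟨5*i, by simpa using by omega⟩
  | succ k' =>
    have hk' : 132 * 5^k' ≤ (n+4)/5 := by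
      have h5 : 5 * (132 * 5^k') = 132 * 5^(k'+1) := by ring
      omega
    obtain ⟨i, hi⟩ := ih ((n+4)/5) (by omega) k' hk'
    obtain h := stepD i _ n (7 * 2^k' + 5) hm1 hm2 (by omega)
    refine ⟨5*i, ?_⟩
    have h2 : 2^(k'+1) = 2 * 2^k' := by ring
    omega


/-- For every `C ≥ 4` and every `n ≥ 132 * 5^(C-4)`, Φ has a factor of length `n`
with at least `n/3 + C` zeros, and a factor of length `n` with at most `n/3 - C` zeros. -/
theorem Phi_many_and_few_zeros (C : ℕ) (hC : 4 ≤ C) (n : ℕ)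
    (hn : 132 * 5 ^ (C - 4) ≤ n) :
    (∃ u : List ℕ, IsFactor Phi u ∧ u.length = n ∧
      (n : ℚ) / 3 + C ≤ (u.count 0 : ℚ)) ∧
    (∃ u : List ℕ, IsFactor Phi u ∧ u.length = n ∧
      (u.count 0 : ℚ) ≤ (n : ℚ) / 3 - C) := by
  have hpow : C - 4 < 2^(C-4) := Nat.lt_two_pow_self
  have hC3 : 3 * C ≤ 7 * 2^(C-4) + 5 := by omega
  constructor
  · obtain ⟨i, hi⟩ := mainE n (C-4) hn
    refine ⟨factorAt Phi i n, ⟨i, by rw [factorAt_length]⟩, factorAt_length _ _ _, ?_⟩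
    have h : n + 3 * C ≤ 3 * (factorAt Phi i n).count 0 := by omega
    have hq : (n:ℚ) + 3 * C ≤ 3 * ((factorAt Phi i n).count 0 : ℚ) := by exact_mod_cast h
    linarith
  · obtain ⟨i, hi⟩ := mainD n (C-4) hn
    refine ⟨factorAt Phi i n, ⟨i, by rw [factorAt_length]⟩, factorAt_length _ _ _, ?_⟩
    have h : 3 * (factorAt Phi i n).count 0 + 3 * C ≤ n := by omega
    have hq : 3 * ((factorAt Phi i n).count 0 : ℚ) + 3 * C ≤ (n:ℚ) := by exact_mod_cast h
    linarith
end

section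
/- Let Φ be the fixed point starting with 0 of the morphism 0 ↦ 00101, 1 ↦ 11011. For every C ≥ 4, for all n ≥ 132·5^{C−4} and every integer D with −C ≤ D ≤ C, there exists a factor u of Φ with |u| = n and |u|_0 = ⌊n/3⌋ + D. -/
lemma phiL_prefix {l₁ l₂ : List ℕ} (h : l₁ <+: l₂) : phiL l₁ <+: phiL l₂ := by
  obtain ⟨t, rfl⟩ := h
  exact ⟨phiL t, List.flatMap_append.symm⟩

lemma W_length (k : ℕ) : (phiL^[k] [0]).length = 5 ^ k := by
  induction k with
  | zero => rfl
  | succ k ih =>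
    rw [Function.iterate_succ_apply', phiL_length, ih, pow_succ]
    ring

lemma W_prefix_succ (k : ℕ) : phiL^[k] [0] <+: phiL^[k + 1] [0] := by
  induction k with
  | zero => exact ⟨[0, 1, 0, 1], rfl⟩
  | succ k ih =>
    rw [Function.iterate_succ_apply', Function.iterate_succ_apply' phiL (k + 1)]
    exact phiL_prefix ih

lemma W_prefix_le {k k' : ℕ} (h : k ≤ k') : phiL^[k] [0] <+: phiL^[k'] [0] := by
  induction k' with
  | zero => rw [Nat.le_zero.mp h]
  | succ k' ih =>
    rcases Nat.lt_or_ge k (k' + 1) with h' | h'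
    · exact (ih (Nat.lt_succ_iff.mp h')).trans (W_prefix_succ k')
    · rw [Nat.le_antisymm h h']

lemma prefix_getD {l₁ l₂ : List ℕ} (h : l₁ <+: l₂) {m : ℕ} (hm : m < l₁.length) :
    l₂.getD m 0 = l₁.getD m 0 := by
  obtain ⟨t, rfl⟩ := h
  exact List.getD_append l₁ t 0 m hm

lemma Phi_eq_getD {k m : ℕ} (h : m < 5 ^ k) : Phi m = (phiL^[k] [0]).getD m 0 := by
  have hm : m < 5 ^ (m + 1) :=
    Nat.lt_of_le_of_lt (Nat.le_succ m) (Nat.lt_pow_self (n := m + 1) (by norm_num : 1 < 5))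
  rcases Nat.le_total k (m + 1) with hk | hk
  · rw [show Phi m = (phiL^[m+1] [0]).getD m 0 from rfl,
      prefix_getD (W_prefix_le hk) (by rw [W_length]; exact h)]
  · rw [show Phi m = (phiL^[m+1] [0]).getD m 0 from rfl,
      ← prefix_getD (W_prefix_le hk) (by rw [W_length]; exact hm)]

lemma phiL_getD_s10 (l : List ℕ) : ∀ (t r : ℕ), r < 5 → t < l.length →
    (phiL l).getD (5 * t + r) 0 = (phiMap (l.getD t 0)).getD r 0 := by
  induction l with
  | nil => intro t r _ ht; simp at ht
  | cons a l ih =>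
    intro t r hr ht
    rw [phiL_cons]
    cases t with
    | zero =>
      simp only [Nat.mul_zero, Nat.zero_add]
      rw [List.getD_append _ _ _ _ (by rw [phiMap_length]; exact hr)]
      rfl
    | succ t =>
      have h5 : 5 * (t + 1) + r = (phiMap a).length + (5 * t + r) := by
        rw [phiMap_length]; ring
      rw [h5, List.getD_append_right _ _ _ _ (Nat.le_add_right _ _),
        Nat.add_sub_cancel_left]
      exact ih t r hr (by rw [List.length_cons] at ht; omega)

lemma Phi_mul5 (t r : ℕ) (hr : r < 5) : Phi (5 * t + r) = (phiMap (Phi t)).getD r 0 := by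
  have ht : t < 5 ^ (t + 1) :=
    Nat.lt_of_le_of_lt (Nat.le_succ t) (Nat.lt_pow_self (n := t + 1) (by norm_num : 1 < 5))
  have h2 : 5 * t + r < 5 ^ (t + 2) := by
    have : 5 * t + r < 5 * (t + 1) := by omega
    calc 5 * t + r < 5 * (t + 1) := this
    _ ≤ 5 * 5 ^ (t + 1) := by exact Nat.mul_le_mul_left 5 ht
    _ = 5 ^ (t + 2) := by ring
  rw [Phi_eq_getD h2, Phi_eq_getD ht, Function.iterate_succ_apply']
  exact phiL_getD_s10 _ t r hr (by rw [W_length]; exact ht)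

lemma Phi_zero : Phi 0 = 0 := rfl

lemma Phi01 (t : ℕ) : Phi t = 0 ∨ Phi t = 1 := by
  induction t using Nat.strong_induction_on with
  | _ t ih =>
    rcases Nat.eq_zero_or_pos t with rfl | hpos
    · left; rfl
    · have h5 : t % 5 < 5 := Nat.mod_lt _ (by norm_num)
      have ht : t = 5 * (t / 5) + t % 5 := (Nat.div_add_mod t 5).symm
      have hlt : t / 5 < t := Nat.div_lt_self hpos (by norm_num)
      rw [ht, Phi_mul5 _ _ h5]
      have h5' : t % 5 = 0 ∨ t % 5 = 1 ∨ t % 5 = 2 ∨ t % 5 = 3 ∨ t % 5 = 4 := by omega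
      rcases ih (t / 5) hlt with h | h <;> rw [h] <;>
        rcases h5' with h' | h' | h' | h' | h' <;> rw [h'] <;> decide

def Z (n : ℕ) : ℕ := (factorAt Phi 0 n).count 0

lemma Z_zero : Z 0 = 0 := rfl

lemma Z_succ (n : ℕ) : Z (n + 1) = Z n + (if Phi n = 0 then 1 else 0) := by
  unfold Z factorAt
  rw [List.range_succ, List.map_append, List.count_append]
  simp [List.count_cons, Nat.zero_add, beq_iff_eq]

lemma Z_win : ∀ (n i : ℕ), Z i + (factorAt Phi i n).count 0 = Z (i + n) := by
  intro n
  induction n with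
  | zero => intro i; simp [factorAt]
  | succ n ih =>
    intro i
    have : factorAt Phi i (n + 1) = factorAt Phi i n ++ [Phi (i + n)] := by
      unfold factorAt; rw [List.range_succ, List.map_append]; rfl
    rw [this, List.count_append, ← Nat.add_assoc, ih, ← Nat.add_assoc, Z_succ]
    rcases Phi01 (i + n) with h | h <;> simp [h, beq_iff_eq]

lemma Z_part (t r : ℕ) (hr : r ≤ 5) :
    Z (5 * t + r) = Z (5 * t) +
      (if Phi t = 0 then [0,1,2,2,3,3].getD r 0 else [0,0,0,1,1,1].getD r 0) := by
  rw [← Z_win r (5 * t)]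
  congr 1
  have hfac : factorAt Phi (5 * t) r = (List.range r).map (fun j => (phiMap (Phi t)).getD j 0) := by
    unfold factorAt
    apply List.map_congr_left
    intro j hj
    exact Phi_mul5 t j (lt_of_lt_of_le (List.mem_range.mp hj) hr)
  rw [hfac]
  rcases Phi01 t with h | h
  · rw [h, if_pos rfl]
    interval_cases r <;> decide
  · rw [h, if_neg (by norm_num)]
    interval_cases r <;> decide

lemma Z_mul5 : ∀ (t : ℕ), Z (5 * t) = 2 * Z t + t := by
  intro t
  induction t with
  | zero => rfl
  | succ t ih =>
    have h1 : 5 * (t + 1) = 5 * t + 5 := by ring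
    rw [h1, Z_part t 5 le_rfl, ih, Z_succ]
    rcases Phi01 t with h | h
    · rw [h, if_pos rfl, if_pos rfl]; simp only [List.getD_cons_zero, List.getD_cons_succ]; omega
    · rw [h, if_neg (by norm_num), if_neg (by norm_num)]; simp only [List.getD_cons_zero, List.getD_cons_succ]; omega

def dd (n : ℕ) : ℤ := 3 * (Z n : ℤ) - n

lemma dd_zero : dd 0 = 0 := by simp [dd, Z_zero]

lemma dd_mul5 (t : ℕ) : dd (5 * t) = 2 * dd t := by
  unfold dd
  rw [Z_mul5]
  push_cast
  ring

lemma dd_part (t r : ℕ) (hr : r < 5) :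
    2 * dd t - 2 ≤ dd (5 * t + r) ∧ dd (5 * t + r) ≤ 2 * dd t + 5 := by
  have hz5 := Z_mul5 t
  have hz := Z_part t r (le_of_lt hr)
  unfold dd
  rcases Phi01 t with h | h
  · rw [h, if_pos rfl] at hz
    interval_cases r <;> simp only [List.getD_cons_zero, List.getD_cons_succ] at hz <;>
      (constructor <;> push_cast <;> omega)
  · rw [h, if_neg (by norm_num)] at hz
    interval_cases r <;> simp only [List.getD_cons_zero, List.getD_cons_succ] at hz <;>
      (constructor <;> push_cast <;> omega)

/- ---------------- numerical base facts ---------------- -/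

/-- fuelled fast computation of `Phi`. -/
def phiF : ℕ → ℕ → ℕ
  | 0, _ => 0
  | f + 1, n => if n = 0 then 0 else (phiMap (phiF f (n / 5))).getD (n % 5) 0

/-- fuelled fast computation of `Z`. -/
def ZF : ℕ → ℕ → ℕ
  | 0, _ => 0
  | f + 1, n =>
    if n = 0 then 0 else
      2 * ZF f (n / 5) + n / 5 +
        (if phiF f (n / 5) = 0 then [0,1,2,2,3,3].getD (n % 5) 0
         else [0,0,0,1,1,1].getD (n % 5) 0)

lemma FZ : ∀ (f : ℕ), ∀ n < 5 ^ f, phiF f n = Phi n ∧ ZF f n = Z n := by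
  intro f
  induction f with
  | zero => intro n hn; interval_cases n; exact ⟨rfl, rfl⟩
  | succ f ih =>
    intro n hn
    rcases Nat.eq_zero_or_pos n with rfl | hpos
    · exact ⟨rfl, rfl⟩
    · have ht : n / 5 < 5 ^ f := by
        rw [Nat.div_lt_iff_lt_mul (by norm_num)]
        calc n < 5 ^ (f + 1) := hn
        _ = 5 ^ f * 5 := by ring
      obtain ⟨ihP, ihZ⟩ := ih (n / 5) ht
      have hr : n % 5 < 5 := Nat.mod_lt _ (by norm_num)
      have hnn : n = 5 * (n / 5) + n % 5 := by omega
      constructor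
      · rw [phiF, if_neg (by omega), ihP]
        conv_rhs => rw [hnn]
        rw [Phi_mul5 _ _ hr]
      · rw [ZF, if_neg (by omega), ihP, ihZ]
        conv_rhs => rw [hnn]
        rw [Z_part _ _ (le_of_lt hr), Z_mul5]

def lw : List ℕ := [219, 219, 223, 217, 219, 219, 217, 217, 217, 216, 217, 217, 213, 1111, 1111, 209, 209, 223, 207, 209, 219, 207, 217, 217, 216, 217, 217, 213, 1091, 1091, 209, 209, 1088, 207, 209, 1084, 207, 1082, 1082, 1081, 1082, 1082, 1081, 1081, 1081, 1079, 1079, 1081, 1077, 1079, 1084, 1077, 1082, 1082, 1081, 1082, 1082, 1068, 1081, 1081, 1064, 1064, 1081, 1062, 1064, 1079, 1062, 1077, 1077, 1076, 1077, 1077, 1048, 1076, 1076, 1044, 1044, 1048, 1042, 1044, 1044, 1042, 1042, 1042, 1041, 1042, 1042, 1038, 1061, 1061, 1034, 1034, 1048, 1032, 1034, 1044, 1032, 1042, 1042, 1041, 1042, 1042, 1038, 1041, 1041, 1034, 1034, 1038, 1032, 1034, 1034, 1032, 1032, 1032, 1031, 1032, 1032, 1031, 1031, 1031, 1029, 1029,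 1031, 1027, 1029, 1034, 1027, 1032, 1032, 1031, 1032, 1032, 1031, 1031, 1031, 1029, 1029, 1031, 1027, 1029, 1079, 1027, 1077, 1077, 1076, 1077, 1077, 1048, 1076, 1076, 1044, 1044, 1048, 1042, 1044, 1044, 1042, 1042, 1042, 1041, 1042, 1042, 1038, 1061, 1061, 1034, 1034, 1048, 1032, 1034, 1044, 1032, 1042, 1042, 1041, 1042, 1042, 1038, 1041, 1041, 1034, 1034, 1038, 1032, 1034, 1034, 1032, 1032, 1032, 1031, 1032, 1032, 1031, 1031, 1031, 1029, 1029, 1031, 1027, 1029, 1034, 1027, 1032, 1032, 1031, 1032, 1032, 1031, 1031, 1031, 1029, 1029, 1031, 1027, 1029, 1029, 1027, 1027, 1027, 1026, 1027, 1027, 1023, 1026, 1026, 1019, 1019, 1023, 1017, 1019, 1019, 1017, 1017, 1017, 1016, 1017, 1017, 1013, 1026, 1026, 1009, 1009, 1023, 1007, 1009, 1019, 1007, 1017, 1017, 1016, 1017, 1017, 1013, 1016, 1016, 1009, 1009, 1013, 1007, 1009, 1009, 1007, 1007, 1007, 1006, 1007, 1007, 1006, 1006, 1006, 1004, 1004,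 1006, 1002, 1004, 1009, 1002, 1007, 1007, 1006, 1007, 1007, 868, 1006, 1006, 864, 864, 1006, 862, 864, 1029, 862, 1027, 1027, 1026, 1027, 1027, 848, 1026, 1026, 844, 844, 848, 842, 844, 844, 842, 842, 842, 841, 842, 842, 838, 961, 961, 834, 834, 848, 832, 834, 844, 832, 842, 842, 841, 842, 842, 838, 941, 941, 834, 834, 938, 832, 834, 934, 832, 932, 932, 931, 932, 932, 931, 931, 931, 929, 929, 931, 927, 929, 934, 927, 932, 932, 931, 932, 932, 868, 931, 931, 864, 864, 931, 862, 864, 5879, 862, 5877, 5877, 5876, 5877, 5877, 848, 5876, 5876, 844, 844, 848, 842, 844, 844, 842, 842, 842, 841, 842, 842, 838, 861, 861, 834, 834, 848, 832, 834, 844, 832, 842, 842, 841, 842, 842, 838, 841, 841, 834, 834, 838, 832, 834, 834, 832, 832, 832, 831, 832, 832, 831, 831, 831, 829, 829, 831, 827, 829, 834, 827, 832, 832, 831, 832, 832, 818, 831, 831, 814, 814, 831, 812, 814, 829, 812, 827, 827, 826, 827, 827, 798, 826, 826, 794, 794, 798, 792, 794, 794, 792, 792, 792, 791, 792, 792, 788,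 811, 811, 784, 784, 798, 782, 784, 794, 782, 792, 792, 791, 792, 792, 788, 791, 791, 784, 784, 788, 782, 784, 784, 782, 782, 782, 781, 782, 782, 781, 781, 781, 779, 779, 781, 777, 779, 784, 777, 782, 782, 781, 782, 782, 781, 781, 781, 779, 779, 781, 777, 779, 829, 777, 827, 827, 826, 827, 827, 798, 826, 826, 794, 794, 798]

set_option maxRecDepth 10000 in
lemma b1 : ∀ j ∈ List.range 528,
    14 + (132 + j) ≤ 3 * ZF 10 (132 + j) := by decide

set_option maxRecDepth 10000 in
lemma b2 : ∀ j ∈ List.range 528,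
    lw.getD j 0 ≤ 5879 ∧
    3 * ZF 10 (lw.getD j 0 + (132 + j)) + 12 + (132 + j) % 3
      ≤ (132 + j) + 3 * ZF 10 (lw.getD j 0) := by decide

/- ---------------- the two excess lemmas ---------------- -/

lemma high0 : ∀ n, 132 ≤ n → ∃ i, (14 : ℤ) ≤ dd (i + n) - dd i := by
  intro n
  induction n using Nat.strong_induction_on with
  | _ n ih =>
    intro hn
    rcases Nat.lt_or_ge n 660 with h660 | h660
    · refine ⟨0, ?_⟩
      have hb := b1 (n - 132) (List.mem_range.mpr (by omega))
      have hn' : 132 + (n - 132) = n := by omega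
      rw [hn'] at hb
      rw [(FZ 10 n (by norm_num; omega)).2] at hb
      have hZ0 : Z 0 = 0 := rfl
      simp only [Nat.zero_add, dd]
      push_cast
      omega
    · obtain ⟨i', hi'⟩ := ih (n / 5) (by omega) (by omega)
      refine ⟨5 * i', ?_⟩
      have hs : 5 * i' + n = 5 * (i' + n / 5) + n % 5 := by omega
      rw [hs]
      have hp := (dd_part (i' + n / 5) (n % 5) (Nat.mod_lt _ (by norm_num))).1
      rw [dd_mul5 i']
      linarith

lemma high : ∀ (k n : ℕ), 132 * 5 ^ k ≤ n → ∃ i, (12 * 2 ^ k + 2 : ℤ) ≤ dd (i + n) - dd i := by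
  intro k
  induction k with
  | zero => intro n hn; simpa using high0 n (by simpa using hn)
  | succ k ih =>
    intro n hn
    have hn5 : 132 * 5 ^ k ≤ n / 5 := by
      rw [Nat.le_div_iff_mul_le (by norm_num)]
      calc 132 * 5 ^ k * 5 = 132 * 5 ^ (k + 1) := by ring
      _ ≤ n := hn
    obtain ⟨i', hi'⟩ := ih (n / 5) hn5
    refine ⟨5 * i', ?_⟩
    have hs : 5 * i' + n = 5 * (i' + n / 5) + n % 5 := by omega
    rw [hs]
    have hp := (dd_part (i' + n / 5) (n % 5) (Nat.mod_lt _ (by norm_num))).1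
    rw [dd_mul5 i']
    have h2 : (12 * 2 ^ (k + 1) + 2 : ℤ) = 2 * (12 * 2 ^ k + 2) - 2 := by ring
    rw [h2]
    linarith

lemma low0 : ∀ n, 132 ≤ n → ∃ i, dd (i + n) - dd i ≤ -(12 + (n % 3 : ℤ)) := by
  intro n
  induction n using Nat.strong_induction_on with
  | _ n ih =>
    intro hn
    rcases Nat.lt_or_ge n 660 with h660 | h660
    · set j := n - 132 with hj
      have hb := b2 j (List.mem_range.mpr (by omega))
      have hn' : 132 + j = n := by omega
      rw [hn'] at hb
      obtain ⟨hb1, hb2⟩ := hb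
      set i := lw.getD j 0 with hi
      refine ⟨i, ?_⟩
      rw [(FZ 10 (i + n) (by norm_num; omega)).2, (FZ 10 i (by norm_num; omega)).2] at hb2
      unfold dd
      push_cast
      omega
    · obtain ⟨i', hi'⟩ := ih (n / 5) (by omega) (by omega)
      refine ⟨5 * i', ?_⟩
      have hs : 5 * i' + n = 5 * (i' + n / 5) + n % 5 := by omega
      rw [hs]
      have hp := (dd_part (i' + n / 5) (n % 5) (Nat.mod_lt _ (by norm_num))).2
      rw [dd_mul5 i']
      have hm1 : (n : ℤ) % 3 ≤ 2 := by omega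
      have hm2 : (0 : ℤ) ≤ (↑(n / 5) : ℤ) % 3 := Int.emod_nonneg _ (by norm_num)
      linarith

lemma low : ∀ (k n : ℕ), 132 * 5 ^ k ≤ n →
    ∃ i, dd (i + n) - dd i ≤ -(12 + 3 * k + (n % 3 : ℤ)) := by
  intro k
  induction k with
  | zero =>
    intro n hn
    obtain ⟨i, hi⟩ := low0 n (by simpa using hn)
    exact ⟨i, by push_cast; linarith⟩
  | succ k ih =>
    intro n hn
    have hn5 : 132 * 5 ^ k ≤ n / 5 := by
      rw [Nat.le_div_iff_mul_le (by norm_num)]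
      calc 132 * 5 ^ k * 5 = 132 * 5 ^ (k + 1) := by ring
      _ ≤ n := hn
    obtain ⟨i', hi'⟩ := ih (n / 5) hn5
    refine ⟨5 * i', ?_⟩
    have hs : 5 * i' + n = 5 * (i' + n / 5) + n % 5 := by omega
    rw [hs]
    have hp := (dd_part (i' + n / 5) (n % 5) (Nat.mod_lt _ (by norm_num))).2
    rw [dd_mul5 i']
    have hm1 : (n : ℤ) % 3 ≤ 2 := by omega
    have hm2 : (0 : ℤ) ≤ (↑(n / 5) : ℤ) % 3 := Int.emod_nonneg _ (by norm_num)
    push_cast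
    linarith

/- ---------------- intermediate value for ±1 step sequences ---------------- -/

lemma ivt_up (f : ℕ → ℕ) (hf : ∀ i, f (i + 1) ≤ f i + 1) :
    ∀ d a t, f a ≤ t → t ≤ f (a + d) → ∃ i, f i = t := by
  intro d
  induction d with
  | zero => intro a t h1 h2; exact ⟨a, le_antisymm h1 (by simpa using h2)⟩
  | succ d ih =>
    intro a t h1 h2
    by_cases h : f a = t
    · exact ⟨a, h⟩
    · have h1' : f (a + 1) ≤ t := by
        have hlt : f a < t := lt_of_le_of_ne h1 h
        have := hf a
        omega
      have h2' : t ≤ f (a + 1 + d) := by rw [show a + 1 + d = a + (d + 1) by omega]; exact h2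
      exact ih (a + 1) t h1' h2'

lemma ivt_down (f : ℕ → ℕ) (hf : ∀ i, f i ≤ f (i + 1) + 1) :
    ∀ d a t, t ≤ f a → f (a + d) ≤ t → ∃ i, f i = t := by
  intro d
  induction d with
  | zero => intro a t h1 h2; exact ⟨a, le_antisymm (by simpa using h2) h1⟩
  | succ d ih =>
    intro a t h1 h2
    by_cases h : f a = t
    · exact ⟨a, h⟩
    · have h1' : t ≤ f (a + 1) := by have := hf a; omega
      have h2' : f (a + 1 + d) ≤ t := by rw [show a + 1 + d = a + (d + 1) by omega]; exact h2
      exact ih (a + 1) t h1' h2'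

/- ---------------- main theorem ---------------- -/

/-- For every `C ≥ 4`, every `n ≥ 132 * 5^(C-4)`, and every integer `D` with
`-C ≤ D ≤ C`, Φ has a factor of length `n` with exactly `⌊n/3⌋ + D` zeros. -/
theorem Phi_parikh_interval (C : ℕ) (hC : 4 ≤ C) (n : ℕ)
    (hn : 132 * 5 ^ (C - 4) ≤ n) (D : ℤ) (hD1 : -(C : ℤ) ≤ D) (hD2 : D ≤ (C : ℤ)) :
    ∃ u : List ℕ, IsFactor Phi u ∧ u.length = n ∧
      (u.count 0 : ℤ) = (n / 3 : ℕ) + D := by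
  set k := C - 4 with hk
  have hC4 : C = k + 4 := by omega
  -- window count function
  set f : ℕ → ℕ := fun i => (factorAt Phi i n).count 0 with hf
  have hfz : ∀ i, (Z i + f i : ℕ) = Z (i + n) := fun i => Z_win n i
  have hstep_up : ∀ i, f (i + 1) ≤ f i + 1 := by
    intro i
    have h1 := hfz i
    have h2 := hfz (i + 1)
    have h3 := Z_succ i
    have h4 := Z_succ (i + n)
    have h5 : i + 1 + n = (i + n) + 1 := by omega
    rw [h5] at h2
    rcases Phi01 i with h | h <;> rcases Phi01 (i + n) with h' | h' <;>
      simp [h, h'] at h3 h4 <;> omega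
  have hstep_down : ∀ i, f i ≤ f (i + 1) + 1 := by
    intro i
    have h1 := hfz i
    have h2 := hfz (i + 1)
    have h3 := Z_succ i
    have h4 := Z_succ (i + n)
    have h5 : i + 1 + n = (i + n) + 1 := by omega
    rw [h5] at h2
    rcases Phi01 i with h | h <;> rcases Phi01 (i + n) with h' | h' <;>
      simp [h, h'] at h3 h4 <;> omega
  -- high and low windows
  obtain ⟨ihi, hhi⟩ := high k n hn
  obtain ⟨ilo, hlo⟩ := low k n hn
  -- translate excess to counts
  have hfd : ∀ i, 3 * (f i : ℤ) = dd (i + n) - dd i + n := by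
    intro i
    have h1 := hfz i
    unfold dd
    push_cast
    omega
  have hpow2 : (k : ℤ) + 1 ≤ 2 ^ k := by exact_mod_cast (Nat.lt_two_pow_self (n := k))
  have hdiv3 : 3 * ((n / 3 : ℕ) : ℤ) + (n : ℤ) % 3 = n := by omega
  have hmod3 : (n : ℤ) % 3 ≤ 2 := by omega
  have hmod3' : (0 : ℤ) ≤ (n : ℤ) % 3 := Int.emod_nonneg _ (by norm_num)
  have hhigh_count : ((n / 3 : ℕ) : ℤ) + C ≤ f ihi := by
    have h1 := hfd ihi
    have h2 : (3 : ℤ) * C ≤ 12 * 2 ^ k + 2 := by rw [hC4]; push_cast; linarith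
    nlinarith [hfd ihi]
  have hlow_count : (f ilo : ℤ) ≤ ((n / 3 : ℕ) : ℤ) - C := by
    have h1 := hfd ilo
    have h2 : (3 : ℤ) * C = 12 + 3 * (k : ℤ) := by rw [hC4]; push_cast; ring
    linarith
  -- the target
  have hCd : (C : ℤ) ≤ ((n / 3 : ℕ) : ℤ) := by
    have h5k : (k : ℕ) + 1 ≤ 5 ^ k := Nat.lt_pow_self (n := k) (by norm_num : 1 < 5)
    have h3C : 3 * C ≤ n := by
      calc 3 * C = 3 * (k + 4) := by rw [hC4]
      _ ≤ 132 * (k + 1) := by omega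
      _ ≤ 132 * 5 ^ k := Nat.mul_le_mul_left _ h5k
      _ ≤ n := hn
    have : C ≤ n / 3 := by omega
    exact_mod_cast this
  set t : ℤ := ((n / 3 : ℕ) : ℤ) + D with ht
  have ht0 : 0 ≤ t := by omega
  set tn : ℕ := t.toNat with htn
  have htn' : (tn : ℤ) = t := Int.toNat_of_nonneg ht0
  have hle1 : f ilo ≤ tn := by omega
  have hle2 : tn ≤ f ihi := by omega
  have hex : ∃ i, f i = tn := by
    rcases Nat.le_total ilo ihi with h | h
    · exact ivt_up f hstep_up (ihi - ilo) ilo tn hle1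
        (by rw [Nat.add_sub_cancel' h]; exact hle2)
    · exact ivt_down f hstep_down (ilo - ihi) ihi tn hle2
        (by rw [Nat.add_sub_cancel' h]; exact hle1)
  obtain ⟨i, hi⟩ := hex
  refine ⟨factorAt Phi i n, ⟨i, ?_⟩, ?_, ?_⟩
  · congr 1
    simp [factorAt]
  · simp [factorAt]
  · show ((factorAt Phi i n).count 0 : ℤ) = _
    rw [show (factorAt Phi i n).count 0 = f i from rfl, hi, htn']
end

section
/- Let f be the Fibonacci word over {0,1}. For every factor w of f and every m ≥ 1, the set { (|u|_0 mod m, |u|_1 mod m) : u is a prefix of f followed immediately by an occurrence of w } equals all of (ℤ/mℤ)²; in the special case m = 2, for every factor w of f there exist occurrences of w in f preceded by an even number of 0's and occurrences preceded by an odd number of 0's. -/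
/-- the morphism 0 ↦ 01, 1 ↦ 0 (on letters). -/
def fibMap (x : ℕ) : List ℕ := if x = 0 then [0, 1] else [0]

/-- the morphism 0 ↦ 01, 1 ↦ 0 applied to a word. -/
def fibL (l : List ℕ) : List ℕ := l.flatMap fibMap

/-- the `m`-th letter (0-indexed) of the Fibonacci word, the fixed point of
0 ↦ 01, 1 ↦ 0 starting with 0: the iterate applied `m+1` times to `[0]` has
length `> m` and is a prefix of the fixed point. -/
def Fib (m : ℕ) : ℕ := (fibL^[m + 1] [0]).getD m 0

/-- iterates of the morphism on `[0]` -/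
def FW (n : ℕ) : List ℕ := fibL^[n] [0]

lemma fibL_append (l1 l2 : List ℕ) : fibL (l1 ++ l2) = fibL l1 ++ fibL l2 := by
  simp [fibL]

lemma fibL_cons (x : ℕ) (l : List ℕ) : fibL (x :: l) = fibMap x ++ fibL l := by
  simp [fibL]

lemma length_fibL (l : List ℕ) : (fibL l).length = l.length + l.count 0 := by
  induction l with
  | nil => simp [fibL]
  | cons x l ih =>
    rw [fibL_cons, List.length_append, ih, List.count_cons]
    by_cases hx : x = 0 <;> simp [fibMap, hx] <;> omega

lemma count0_fibL (l : List ℕ) : (fibL l).count 0 = l.length := by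
  induction l with
  | nil => simp [fibL]
  | cons x l ih =>
    rw [fibL_cons, List.count_append, ih]
    by_cases hx : x = 0 <;> simp [fibMap, hx, List.count_cons] <;> omega

lemma count1_fibL (l : List ℕ) : (fibL l).count 1 = l.count 0 := by
  induction l with
  | nil => simp [fibL]
  | cons x l ih =>
    rw [fibL_cons, List.count_append, ih, List.count_cons]
    by_cases hx : x = 0 <;> simp [fibMap, hx] <;> omega

lemma FW_succ (n : ℕ) : FW (n + 1) = fibL (FW n) := Function.iterate_succ_apply' _ _ _

lemma fibL_prefix {l1 l2 : List ℕ} (h : l1 <+: l2) : fibL l1 <+: fibL l2 := by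
  obtain ⟨r, rfl⟩ := h
  exact ⟨fibL r, (fibL_append _ _).symm⟩

lemma FW_zero : FW 0 = [0] := rfl

lemma FW_prefix_succ (n : ℕ) : FW n <+: FW (n + 1) := by
  induction n with
  | zero => exact ⟨[1], rfl⟩
  | succ n ih => rw [FW_succ, FW_succ]; exact fibL_prefix ih

lemma FW_prefix {a b : ℕ} (h : a ≤ b) : FW a <+: FW b := by
  induction b with
  | zero => simp_all
  | succ b ih =>
    rcases Nat.lt_or_ge a (b+1) with h' | h'
    · exact (ih (by omega)).trans (FW_prefix_succ b)
    · have : a = b + 1 := by omega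
      subst this; exact List.prefix_refl _

lemma zero_mem_FW (n : ℕ) : (0 : ℕ) ∈ FW n := by
  obtain ⟨r, hr⟩ := FW_prefix (Nat.zero_le n)
  rw [← hr]; simp [FW_zero]

lemma length_FW_lt (n : ℕ) : (FW n).length < (FW (n+1)).length := by
  rw [FW_succ, length_fibL]
  have := List.count_pos_iff.2 (zero_mem_FW n)
  omega

lemma length_FW (n : ℕ) : n + 1 ≤ (FW n).length := by
  induction n with
  | zero => simp [FW_zero]
  | succ n ih => have := length_FW_lt n; omega

lemma prefix_getD_s19 {l1 l2 : List ℕ} (h : l1 <+: l2) {i : ℕ} (hi : i < l1.length) :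
    l2.getD i 0 = l1.getD i 0 := by
  obtain ⟨r, rfl⟩ := h
  rw [List.getD_eq_getElem _ _ hi,
    List.getD_eq_getElem _ _ (lt_of_lt_of_le hi (by simp)),
    List.getElem_append_left hi]

lemma Fib_eq_getD {n i : ℕ} (h : i < (FW n).length) : Fib i = (FW n).getD i 0 := by
  have h1 : i < (FW (i+1)).length := by have := length_FW (i+1); omega
  have : Fib i = (FW (i+1)).getD i 0 := rfl
  rw [this]
  rcases Nat.le_total n (i+1) with hle | hle
  · exact prefix_getD_s19 (FW_prefix hle) h
  · exact (prefix_getD_s19 (FW_prefix hle) h1).symm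

lemma factorAt_eq_of_prefix {u w : List ℕ} {n : ℕ} (h : u ++ w <+: FW n) :
    factorAt Fib u.length w.length = w := by
  have hlen : u.length + w.length ≤ (FW n).length := by
    have := h.length_le; simpa using this
  apply List.ext_getElem
  · simp [factorAt]
  · intro j hj hj'
    simp only [factorAt, List.getElem_map, List.getElem_range]
    have hjw : j < w.length := by simpa [factorAt] using hj'
    have hlt : u.length + j < (FW n).length := by omega
    rw [Fib_eq_getD hlt]
    obtain ⟨r, hr⟩ := h
    rw [← hr, List.append_assoc, List.getD_eq_getElem _ _ (by simp; omega)]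
    rw [List.getElem_append_right (by simp)]
    simp [List.getElem_append_left hjw]


lemma fibMap_head (c : ℕ) : ∃ t, fibMap c = 0 :: t := by
  unfold fibMap; split <;> exact ⟨_, rfl⟩

/-- if `l` is a prefix of some `FW n`, then `fibL l ++ [0]` is also a prefix. -/
lemma fibL_prefix_cons0 {l : List ℕ} {n : ℕ} (h : l <+: FW n) :
    fibL l ++ [0] <+: FW (n + 2) := by
  have h1 : l <+: FW (n+1) := h.trans (FW_prefix_succ n)
  have hlen : l.length < (FW (n+1)).length :=
    lt_of_le_of_lt (by simpa using h.length_le) (length_FW_lt n)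
  obtain ⟨r, hr⟩ := h1
  have hrne : r ≠ [] := by
    intro hre; rw [hre, List.append_nil] at hr; rw [hr] at hlen; omega
  obtain ⟨c, r', rfl⟩ := List.exists_cons_of_ne_nil hrne
  obtain ⟨t, ht⟩ := fibMap_head c
  refine ⟨t ++ fibL r', ?_⟩
  have : FW (n+2) = fibL (FW (n+1)) := FW_succ (n+1)
  rw [this, ← hr, fibL_append, fibL_cons, ht]
  simp

lemma key_prefix {u : List ℕ} {n0 : ℕ} (h : u <+: FW n0) (N : ℕ) :
    fibL^[N+1] u ++ FW N <+: FW (n0 + 2 + N) := by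
  induction N with
  | zero => simpa [FW_zero] using fibL_prefix_cons0 h
  | succ N ih =>
    have := fibL_prefix ih
    rw [fibL_append, ← FW_succ, ← Function.iterate_succ_apply' fibL (N+1) u] at this
    have harr : n0 + 2 + N + 1 = n0 + 2 + (N + 1) := by omega
    rwa [← FW_succ, harr] at this

lemma factorAt_FW {i k N : ℕ} (h : i + k ≤ (FW N).length) :
    factorAt Fib i k = ((FW N).drop i).take k := by
  apply List.ext_getElem
  · simp [factorAt]; omega
  · intro j hj hj'
    simp only [factorAt, List.getElem_map, List.getElem_range]
    have hjk : j < k := by simpa [factorAt] using hj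
    have hlt : i + j < (FW N).length := by omega
    rw [Fib_eq_getD hlt, List.getD_eq_getElem _ _ hlt]
    rw [List.getElem_take, List.getElem_drop]

/-- the Parikh step map: `(z, n) ↦ (n, n + z)` where `z` = #zeros, `n` = length. -/
def T0 {m : ℕ} (p : ZMod m × ZMod m) : ZMod m × ZMod m := (p.2, p.2 + p.1)

def T0i {m : ℕ} (p : ZMod m × ZMod m) : ZMod m × ZMod m := (p.2 - p.1, p.1)

lemma T0_T0i {m : ℕ} : Function.LeftInverse (T0 (m := m)) (T0i (m := m)) := by
  intro p; simp [T0, T0i]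

lemma T0_inj {m : ℕ} : Function.Injective (T0 (m := m)) := by
  intro p q h
  simp only [T0, Prod.mk.injEq] at h
  obtain ⟨h1, h2⟩ := h
  have : p.1 = q.1 := by rw [h1] at h2; exact add_left_cancel h2
  exact Prod.ext this h1

lemma iterate_cast {m : ℕ} (u : List ℕ) (j : ℕ) :
    (((fibL^[j] u).count 0 : ZMod m), ((fibL^[j] u).length : ZMod m)) =
      T0^[j] ((u.count 0 : ZMod m), (u.length : ZMod m)) := by
  induction j with
  | zero => rfl
  | succ j ih =>
    rw [Function.iterate_succ_apply' fibL, Function.iterate_succ_apply' T0, ← ih]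
    simp only [T0, count0_fibL, length_fibL, Nat.cast_add]


lemma T0i_T0 {m : ℕ} : Function.LeftInverse (T0i (m := m)) (T0 (m := m)) := by
  intro p; simp [T0, T0i]

lemma T0_add {m : ℕ} (a b : ZMod m × ZMod m) : T0 (a + b) = T0 a + T0 b := by
  simp only [T0, Prod.mk_add_mk, Prod.snd_add, Prod.fst_add, Prod.mk.injEq]
  exact ⟨trivial, by ring⟩

lemma reach_univ (m : ℕ) [NeZero m] (p : ZMod m × ZMod m) :
    ∃ (n : ℕ) (u : List ℕ), u <+: FW n ∧
      ((u.count 0 : ZMod m), (u.length : ZMod m)) = p := by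
  set R : Set (ZMod m × ZMod m) :=
    {q | ∃ (n : ℕ) (u : List ℕ), u <+: FW n ∧
      ((u.count 0 : ZMod m), (u.length : ZMod m)) = q} with hR
  suffices hsu : p ∈ R by exact hsu
  have h0 : ((0 : ZMod m), (0 : ZMod m)) ∈ R := ⟨0, [], List.nil_prefix, by simp⟩
  have hT0 : ∀ q ∈ R, T0 q ∈ R := by
    rintro q ⟨n, u, hu, rfl⟩
    refine ⟨n + 1, fibL u, by rw [FW_succ]; exact fibL_prefix hu, ?_⟩
    rw [count0_fibL, length_fibL]
    simp only [T0, Nat.cast_add]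
  have hT1 : ∀ q ∈ R, T0 q + (1, 1) ∈ R := by
    rintro q ⟨n, u, hu, rfl⟩
    refine ⟨n + 2, fibL u ++ [0], fibL_prefix_cons0 hu, ?_⟩
    simp only [List.count_append, List.length_append, count0_fibL, length_fibL,
      T0, Prod.mk_add_mk, Prod.mk.injEq]
    constructor <;> simp <;> push_cast <;> ring
  have hfin : R.Finite := Set.toFinite R
  have him : T0 '' R = R :=
    Set.eq_of_subset_of_ncard_le (by rintro q ⟨r, hr, rfl⟩; exact hT0 r hr)
      (le_of_eq (Set.ncard_image_of_injective R T0_inj).symm) hfin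
  have hpre : ∀ q ∈ R, T0i q ∈ R := by
    intro q hq
    rw [← him] at hq
    obtain ⟨r, hr, rfl⟩ := hq
    rwa [T0i_T0]
  have hadd11 : ∀ q ∈ R, q + (1, 1) ∈ R := by
    intro q hq
    have := hT1 _ (hpre q hq)
    rwa [T0_T0i] at this
  have hadd12 : ∀ q ∈ R, q + (1, 2) ∈ R := by
    intro q hq
    have h1 := hadd11 _ (hpre q hq)
    have h2 := hT0 _ h1
    rw [T0_add, T0_T0i] at h2
    have : T0 ((1 : ZMod m), (1 : ZMod m)) = (1, 2) := by
      simp [T0]; ring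
    rwa [this] at h2
  have base : ∀ a : ℕ, (((a : ℕ) : ZMod m), ((a : ℕ) : ZMod m)) ∈ R := by
    intro a
    induction a with
    | zero => simpa using h0
    | succ a ih =>
      have := hadd11 _ ih
      rw [Prod.mk_add_mk] at this
      push_cast
      convert this using 2 <;> ring
  have hsum : ∀ (b a : ℕ), (((a + b : ℕ) : ZMod m), ((a + 2 * b : ℕ) : ZMod m)) ∈ R := by
    intro b
    induction b with
    | zero => intro a; simpa using base a
    | succ b ih =>
      intro a
      have := hadd12 _ (ih a)
      rw [Prod.mk_add_mk] at this
      push_cast at this ⊢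
      convert this using 2 <;> ring
  obtain ⟨x, y⟩ := p
  set bz : ZMod m := y - x with hbz
  set az : ZMod m := x - bz with haz
  have := hsum bz.val az.val
  have hx : ((az.val + bz.val : ℕ) : ZMod m) = x := by
    push_cast [ZMod.natCast_val, ZMod.cast_id]
    rw [haz, hbz]; ring
  have hy : ((az.val + 2 * bz.val : ℕ) : ZMod m) = y := by
    push_cast [ZMod.natCast_val, ZMod.cast_id]
    rw [haz, hbz]; ring
  rwa [hx, hy] at this


/-- WELLDOC property of the Fibonacci word: for every factor `v` and every `m ≥ 1`,
the pairs `(|u|₀ mod m, |u|₁ mod m)`, where `u` ranges over the prefixes of the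
Fibonacci word immediately followed by an occurrence of `v`, exhaust all of
`(ℤ/mℤ)²`; in particular (case `m = 2`) `v` has occurrences preceded by an even
number of 0's and occurrences preceded by an odd number of 0's. -/
theorem fibWord_welldoc (v : List ℕ) (hv : IsFactor Fib v) :
    (∀ m : ℕ, 1 ≤ m → ∀ p : ZMod m × ZMod m, ∃ i : ℕ,
      factorAt Fib i v.length = v ∧
      (((factorAt Fib 0 i).count 0 : ZMod m), ((factorAt Fib 0 i).count 1 : ZMod m)) = p) ∧
    (∃ i : ℕ, factorAt Fib i v.length = v ∧ Even ((factorAt Fib 0 i).count 0)) ∧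
    (∃ i : ℕ, factorAt Fib i v.length = v ∧ Odd ((factorAt Fib 0 i).count 0)) := by
  obtain ⟨i0, hvi⟩ := hv
  have hmain : ∀ m : ℕ, 1 ≤ m → ∀ p : ZMod m × ZMod m, ∃ i : ℕ,
      factorAt Fib i v.length = v ∧
      (((factorAt Fib 0 i).count 0 : ZMod m), ((factorAt Fib 0 i).count 1 : ZMod m)) = p := by
    intro m hm p
    haveI : NeZero m := ⟨by omega⟩
    set N := i0 + v.length with hN
    have hNlen : i0 + v.length ≤ (FW N).length := by have := length_FW N; omega
    have hvW : v = ((FW N).drop i0).take v.length := by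
      rw [← factorAt_FW hNlen]; exact hvi
    set W1 : List ℕ := (FW N).take i0 with hW1
    set W2 : List ℕ := (FW N).drop (i0 + v.length) with hW2
    have hdecomp : W1 ++ (v ++ W2) = FW N := by
      rw [hvW, hW1, hW2]
      rw [← List.drop_drop, List.take_append_drop, List.take_append_drop]
    obtain ⟨x, y⟩ := p
    set d0 : ZMod m := x - (W1.count 0 : ZMod m) with hd0
    set d1 : ZMod m := y - (W1.count 1 : ZMod m) with hd1
    obtain ⟨n0, u', hu', hcast⟩ := reach_univ m (T0i^[N] (d1, d0))
    set X := fibL^[N+1] u' ++ W1 with hX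
    have hkey : fibL^[N+1] u' ++ FW N <+: FW (n0 + 2 + N) := key_prefix hu' N
    have hXveq : (X ++ v) ++ W2 = fibL^[N+1] u' ++ FW N := by
      rw [← hdecomp, hX]; simp [List.append_assoc]
    have hXv : X ++ v <+: FW (n0 + 2 + N) := by
      refine List.IsPrefix.trans ?_ hkey
      rw [← hXveq]; exact ⟨W2, rfl⟩
    have hocc : factorAt Fib X.length v.length = v := factorAt_eq_of_prefix hXv
    have hXpref : factorAt Fib 0 X.length = X := by
      have h1 : ([] : List ℕ) ++ X <+: FW (n0 + 2 + N) := by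
        simpa using List.IsPrefix.trans (List.prefix_append X v) hXv
      simpa using factorAt_eq_of_prefix h1
    have hc2 : (((fibL^[N] u').count 0 : ZMod m), ((fibL^[N] u').length : ZMod m))
        = (d1, d0) := by
      rw [iterate_cast, hcast, Function.LeftInverse.iterate T0_T0i N _]
    have hc2a : ((fibL^[N] u').count 0 : ZMod m) = d1 := congrArg Prod.fst hc2
    have hc2b : ((fibL^[N] u').length : ZMod m) = d0 := congrArg Prod.snd hc2
    refine ⟨X.length, hocc, ?_⟩
    rw [hXpref]
    have hcount0 : X.count 0 = (fibL^[N] u').length + W1.count 0 := by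
      rw [hX, List.count_append, Function.iterate_succ_apply' fibL, count0_fibL]
    have hcount1 : X.count 1 = (fibL^[N] u').count 0 + W1.count 1 := by
      rw [hX, List.count_append, Function.iterate_succ_apply' fibL, count1_fibL]
    rw [hcount0, hcount1]
    push_cast
    rw [hc2a, hc2b, hd0, hd1]
    simp [Prod.mk.injEq]
  refine ⟨hmain, ?_, ?_⟩
  · obtain ⟨i, hi, hp⟩ := hmain 2 (by norm_num) (0, 0)
    exact ⟨i, hi, ZMod.natCast_eq_zero_iff_even.mp (congrArg Prod.fst hp)⟩
  · obtain ⟨i, hi, hp⟩ := hmain 2 (by norm_num) (1, 0)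
    exact ⟨i, hi, ZMod.natCast_eq_one_iff_odd.mp (congrArg Prod.fst hp)⟩
end
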